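/- Suppose Δ ⊆ ℝ^m is nonempty and bounded, f is lower semicontinuous on X × cl(Δ), Assumptions 2 and 3 hold (X compact convex, f(·,δ) convex on X, and the robust constraint is feasible), and there exists a constant L_g ≥ 0 such that |g_d(ω) − g_d(ω')| ≤ L_g · max_{1≤i≤d} ‖δ_i − δ'_i‖ for all ω = (δ_1,…,δ_d), ω' = (δ'_1,…,δ'_d) ∈ cl(Δ)^d. Then there exist points δ*_1,…,δ*_d ∈ cl(Δ) such that g_d(δ*_1,…,δ*_d) = J*. -/

import Mathlib

open MeasureTheory Set

/-- Scenario optimal value `g_N(ω) = inf { c·x : x ∈ X, f(x, δ_i) ≤ 0, i = 1,…,N }`. -/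
noncomputable def scenVal {d m N : ℕ} (X : Set (EuclideanSpace ℝ (Fin d)))
    (c : EuclideanSpace ℝ (Fin d))
    (f : EuclideanSpace ℝ (Fin d) → EuclideanSpace ℝ (Fin m) → ℝ)
    (ω : Fin N → EuclideanSpace ℝ (Fin m)) : ℝ :=
  sInf ((fun x => ∑ i, c i * x i) '' {x ∈ X | ∀ i, f x (ω i) ≤ 0})

/-- Robust optimal value `J* = inf { c·x : x ∈ X, f(x,δ) ≤ 0 for all δ ∈ Δ }`. -/
noncomputable def robustVal {d m : ℕ} (X : Set (EuclideanSpace ℝ (Fin d)))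
    (c : EuclideanSpace ℝ (Fin d))
    (f : EuclideanSpace ℝ (Fin d) → EuclideanSpace ℝ (Fin m) → ℝ)
    (Δ : Set (EuclideanSpace ℝ (Fin m))) : ℝ :=
  sInf ((fun x => ∑ i, c i * x i) '' {x ∈ X | ∀ δ ∈ Δ, f x δ ≤ 0})


private lemma lscClosedSub {α : Type*} [TopologicalSpace α] {s : Set α} {g : α → ℝ}
    (hs : IsClosed s) (hg : LowerSemicontinuousOn g s) (a : ℝ) :
    IsClosed {x ∈ s | g x ≤ a} := by
  refine isClosed_of_closure_subset fun x hx => ?_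
  have hxs : x ∈ s := hs.closure_subset (closure_mono (fun y hy => hy.1) hx)
  refine ⟨hxs, ?_⟩
  by_contra h
  push_neg at h
  have h1 : ∀ᶠ z in nhdsWithin x s, a < g z := hg x hxs a h
  have hne : (nhdsWithin x {y ∈ s | g y ≤ a}).NeBot := mem_closure_iff_nhdsWithin_neBot.mp hx
  have h2 : ∀ᶠ z in nhdsWithin x {y ∈ s | g y ≤ a}, a < g z :=
    h1.filter_mono (nhdsWithin_mono x fun y hy => hy.1)
  obtain ⟨z, hz1, hz2⟩ := (h2.and eventually_mem_nhdsWithin).exists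
  exact absurd hz2.2 (not_le.mpr hz1)

private lemma lsc_fst {α β : Type*} [TopologicalSpace α] [TopologicalSpace β]
    {s : Set α} {t : Set β} {f : α → β → ℝ}
    (h : LowerSemicontinuousOn (Function.uncurry f) (s ×ˢ t)) {b : β} (hb : b ∈ t) :
    LowerSemicontinuousOn (fun x => f x b) s := by
  intro x hx y hy
  have h1 := h (x, b) ⟨hx, hb⟩ y hy
  have ht : Filter.Tendsto (fun x => (x, b)) (nhdsWithin x s) (nhdsWithin (x, b) (s ×ˢ t)) := by
    rw [tendsto_nhdsWithin_iff]
    exact ⟨((Continuous.tendsto (by fun_prop) x).mono_left nhdsWithin_le_nhds),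
      eventually_mem_nhdsWithin.mono fun z hz => ⟨hz, hb⟩⟩
  exact ht.eventually h1

private lemma lsc_snd {α β : Type*} [TopologicalSpace α] [TopologicalSpace β]
    {s : Set α} {t : Set β} {f : α → β → ℝ}
    (h : LowerSemicontinuousOn (Function.uncurry f) (s ×ˢ t)) {a : α} (ha : a ∈ s) :
    LowerSemicontinuousOn (fun y => f a y) t := by
  intro b hb y hy
  have h1 := h (a, b) ⟨ha, hb⟩ y hy
  have ht : Filter.Tendsto (fun y => (a, y)) (nhdsWithin b t) (nhdsWithin (a, b) (s ×ˢ t)) := by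
    rw [tendsto_nhdsWithin_iff]
    exact ⟨((Continuous.tendsto (by fun_prop) b).mono_left nhdsWithin_le_nhds),
      eventually_mem_nhdsWithin.mono fun z hz => ⟨ha, hz⟩⟩
  exact ht.eventually h1

/-- If Δ is bounded, f is l.s.c. on X × cl(Δ), Assumptions 2–3 hold, and g_d is
Lipschitz in the sense |g_d(ω) − g_d(ω')| ≤ L_g · max_i ‖δ_i − δ'_i‖ on cl(Δ)^d,
then there exist δ*_1,…,δ*_d ∈ cl(Δ) with g_d(δ*_1,…,δ*_d) = J*. -/
theorem stmt_7 {d m : ℕ} (hd : 1 ≤ d)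
    (X : Set (EuclideanSpace ℝ (Fin d))) (c : EuclideanSpace ℝ (Fin d))
    (Δ : Set (EuclideanSpace ℝ (Fin m))) (hΔne : Δ.Nonempty)
    (hΔbdd : Bornology.IsBounded Δ)
    (f : EuclideanSpace ℝ (Fin d) → EuclideanSpace ℝ (Fin m) → ℝ)
    (hlsc : LowerSemicontinuousOn (Function.uncurry f) (X ×ˢ closure Δ))
    -- Assumption 2
    (hfeas : ∃ x ∈ X, ∀ δ ∈ Δ, f x δ ≤ 0)
    -- Assumption 3 (X compact convex, f(·,δ) convex)
    (hXcomp : IsCompact X) (hXconv : Convex ℝ X)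
    (hconv : ∀ δ ∈ Δ, ConvexOn ℝ X fun x => f x δ)
    -- Lipschitz condition on g_d
    (Lg : ℝ) (hLg : 0 ≤ Lg)
    (hLip : ∀ ω ω' : Fin d → EuclideanSpace ℝ (Fin m),
      (∀ i, ω i ∈ closure Δ) → (∀ i, ω' i ∈ closure Δ) →
      |scenVal X c f ω - scenVal X c f ω'| ≤
        Lg * Finset.univ.sup' (Finset.univ_nonempty_iff.mpr ⟨⟨0, hd⟩⟩)
          (fun i => ‖ω i - ω' i‖)) :
    ∃ ωstar : Fin d → EuclideanSpace ℝ (Fin m),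
      (∀ i, ωstar i ∈ closure Δ) ∧ scenVal X c f ωstar = robustVal X c f Δ := by
  classical
  obtain ⟨δ₀, hδ₀⟩ := hΔne
  obtain ⟨x₀, hx₀X, hx₀⟩ := hfeas
  set obj : EuclideanSpace ℝ (Fin d) → ℝ := fun x => ∑ i, c i * x i with hobj_def
  have hobjc : Continuous obj := by fun_prop
  set Feas : Set (EuclideanSpace ℝ (Fin m)) → Set (EuclideanSpace ℝ (Fin d)) :=
    fun T => {x ∈ X | ∀ δ ∈ T, f x δ ≤ 0} with hFeas_def
  set gv : Set (EuclideanSpace ℝ (Fin m)) → ℝ := fun T => sInf (obj '' Feas T) with hgv_def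
  have hXcl : IsClosed X := hXcomp.isClosed
  have lscx : ∀ δ ∈ closure Δ, LowerSemicontinuousOn (fun x => f x δ) X :=
    fun δ hδ => lsc_fst hlsc hδ
  have lscδ : ∀ x ∈ X, LowerSemicontinuousOn (fun δ => f x δ) (closure Δ) :=
    fun x hx => lsc_snd hlsc hx
  have hZcl : ∀ δ ∈ closure Δ, IsClosed {x ∈ X | f x δ ≤ 0} :=
    fun δ hδ => lscClosedSub hXcl (lscx δ hδ) 0
  have hext : ∀ x ∈ X, (∀ δ ∈ Δ, f x δ ≤ 0) → ∀ δ ∈ closure Δ, f x δ ≤ 0 := by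
    intro x hx h δ hδ
    have hsub : closure Δ ⊆ {δ' ∈ closure Δ | f x δ' ≤ 0} :=
      closure_minimal (fun δ' hδ' => ⟨subset_closure hδ', h δ' hδ'⟩)
        (lscClosedSub isClosed_closure (lscδ x hx) 0)
    exact (hsub hδ).2
  have hx₀cl : ∀ δ ∈ closure Δ, f x₀ δ ≤ 0 := hext x₀ hx₀X hx₀
  have hFeasne : ∀ T : Set (EuclideanSpace ℝ (Fin m)), T ⊆ closure Δ → x₀ ∈ Feas T :=
    fun T hT => ⟨hx₀X, fun δ hδ => hx₀cl δ (hT hδ)⟩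
  have hFeascl : ∀ T : Set (EuclideanSpace ℝ (Fin m)), T ⊆ closure Δ → IsClosed (Feas T) := by
    intro T hT
    have : Feas T = X ∩ ⋂ δ ∈ T, {x ∈ X | f x δ ≤ 0} := by
      ext x
      simp only [hFeas_def, mem_setOf_eq, mem_inter_iff, mem_iInter]
      exact ⟨fun h => ⟨h.1, fun δ hδ => ⟨h.1, h.2 δ hδ⟩⟩,
        fun h => ⟨h.1, fun δ hδ => (h.2 δ hδ).2⟩⟩
    rw [this]
    exact hXcl.inter (isClosed_biInter fun δ hδ => hZcl δ (hT hδ))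
  have hFeascomp : ∀ T : Set (EuclideanSpace ℝ (Fin m)), T ⊆ closure Δ → IsCompact (Feas T) :=
    fun T hT => hXcomp.of_isClosed_subset (hFeascl T hT) (fun x hx => hx.1)
  have hbdd : ∀ T : Set (EuclideanSpace ℝ (Fin m)), BddBelow (obj '' Feas T) :=
    fun T => ((hXcomp.image hobjc).bddBelow).mono (image_mono (f := obj) fun x hx => hx.1)
  have hgv_le : ∀ T : Set (EuclideanSpace ℝ (Fin m)), ∀ x ∈ Feas T, gv T ≤ obj x :=
    fun T x hx => csInf_le (hbdd T) ⟨x, hx, rfl⟩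
  have attain : ∀ T : Set (EuclideanSpace ℝ (Fin m)), T ⊆ closure Δ → ∃ x ∈ Feas T, obj x = gv T := by
    intro T hT
    obtain ⟨x, hxF, hmin⟩ := (hFeascomp T hT).exists_isMinOn ⟨x₀, hFeasne T hT⟩
      (hobjc.continuousOn)
    refine ⟨x, hxF, ?_⟩
    have : IsLeast (obj '' Feas T) (obj x) := ⟨⟨x, hxF, rfl⟩, by
      rintro y ⟨z, hz, rfl⟩; exact hmin hz⟩
    exact this.csInf_eq.symm
  have mono : ∀ T T' : Set (EuclideanSpace ℝ (Fin m)), T ⊆ T' → T' ⊆ closure Δ → gv T ≤ gv T' := by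
    intro T T' h hT'
    refine le_csInf ⟨obj x₀, x₀, hFeasne T' hT', rfl⟩ ?_
    rintro y ⟨x, hx, rfl⟩
    exact hgv_le T x ⟨hx.1, fun δ hδ => hx.2 δ (h hδ)⟩
  have hscen : ∀ ω : Fin d → EuclideanSpace ℝ (Fin m), scenVal X c f ω = gv (Set.range ω) := by
    intro ω
    simp only [scenVal, hgv_def, hFeas_def, hobj_def]
    congr 1
    ext x
    simp only [mem_image, mem_setOf_eq, forall_mem_range]
  have hrob : robustVal X c f Δ = gv Δ := rfl
  have hgvcl : gv (closure Δ) = gv Δ := by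
    have hfe : Feas (closure Δ) = Feas Δ := by
      ext x
      exact ⟨fun h => ⟨h.1, fun δ hδ => h.2 δ (subset_closure hδ)⟩,
        fun h => ⟨h.1, hext x h.1 h.2⟩⟩
    rw [hgv_def]
    simp only [hfe]
  -- Step E: finite approximation
  have hfin : ∀ t : ℝ, t < gv Δ → ∃ F : Finset (EuclideanSpace ℝ (Fin m)), ↑F ⊆ Δ ∧ t < gv ↑F := by
    intro t ht
    by_contra hcon
    push_neg at hcon
    have hKcomp : IsCompact {x ∈ X | obj x ≤ t} :=
      hXcomp.of_isClosed_subset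
        (lscClosedSub hXcl (hobjc.lowerSemicontinuous.lowerSemicontinuousOn X) t)
        (fun x hx => hx.1)
    have hZcl' : ∀ δ : Δ, IsClosed {x ∈ X | f x δ.1 ≤ 0} :=
      fun δ => hZcl δ.1 (subset_closure δ.2)
    have hne : ({x ∈ X | obj x ≤ t} ∩ ⋂ δ : Δ, {x ∈ X | f x δ.1 ≤ 0}).Nonempty := by
      by_contra hemp
      rw [Set.not_nonempty_iff_eq_empty] at hemp
      obtain ⟨u, hu⟩ := hKcomp.elim_finite_subfamily_closed _ hZcl' hemp
      set F : Finset (EuclideanSpace ℝ (Fin m)) := u.image (fun δ => δ.1) with hF_def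
      have hFsub : ↑F ⊆ Δ := by
        intro δ hδ
        simp only [hF_def, Finset.coe_image, mem_image, Finset.mem_coe] at hδ
        obtain ⟨δ', -, rfl⟩ := hδ
        exact δ'.2
      obtain ⟨x, hxF, hobjx⟩ := attain ↑F (hFsub.trans subset_closure)
      have hxK : x ∈ {x ∈ X | obj x ≤ t} := ⟨hxF.1, by rw [hobjx]; exact hcon F hFsub⟩
      have hmem : x ∈ {x ∈ X | obj x ≤ t} ∩ ⋂ δ ∈ u, {x ∈ X | f x δ.1 ≤ 0} := by
        refine ⟨hxK, mem_iInter₂.mpr fun δ hδ => ⟨hxF.1, hxF.2 δ.1 ?_⟩⟩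
        exact Finset.mem_coe.mpr (Finset.mem_image_of_mem _ hδ)
      rw [hu] at hmem
      exact hmem
    obtain ⟨x, hxK, hxI⟩ := hne
    have hxFeas : x ∈ Feas Δ := ⟨hxK.1, fun δ hδ => (mem_iInter.mp hxI ⟨δ, hδ⟩).2⟩
    exact absurd ((hgv_le Δ x hxFeas).trans hxK.2) (not_le.mpr ht)
  -- Step F: Helly reduction to d scenarios
  have hhelly : ∀ F : Finset (EuclideanSpace ℝ (Fin m)), ↑F ⊆ Δ → ∀ t : ℝ, t < gv ↑F →
      ∃ D : Finset (EuclideanSpace ℝ (Fin m)), ↑D ⊆ Δ ∧ D.card ≤ d ∧ t ≤ gv ↑D := by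
    intro F hFΔ t ht
    set G : Option (EuclideanSpace ℝ (Fin m)) → Set (EuclideanSpace ℝ (Fin d)) := fun o =>
      Option.rec {x ∈ X | obj x ≤ t} (fun δ => {x ∈ X | f x δ ≤ 0}) o with hG_def
    set s : Finset (Option (EuclideanSpace ℝ (Fin m))) := insert none (F.image some) with hs_def
    have hGconv : ∀ o ∈ s, Convex ℝ (G o) := by
      intro o ho
      match o with
      | none =>
        have hobjconv : ConvexOn ℝ X obj := by
          refine ⟨hXconv, fun x hx y hy a b ha hb hab => le_of_eq ?_⟩
          simp only [hobj_def, smul_eq_mul, Finset.mul_sum]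
          rw [← Finset.sum_add_distrib]
          refine Finset.sum_congr rfl fun i _ => ?_
          simp only [PiLp.add_apply, PiLp.smul_apply, smul_eq_mul]
          ring
        exact hobjconv.convex_le t
      | some δ =>
        have hδF : δ ∈ F := by
          simp only [hs_def, Finset.mem_insert, Finset.mem_image] at ho
          obtain h | ⟨δ', hδ', h⟩ := ho
          · exact absurd h (by simp)
          · rwa [Option.some_inj.mp h] at hδ'
        exact (hconv δ (hFΔ hδF)).convex_le 0
    have hGempty : ¬ (⋂ o ∈ s, G o).Nonempty := by
      rintro ⟨x, hx⟩
      rw [mem_iInter₂] at hx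
      have hxnone : x ∈ G none := hx none (Finset.mem_insert_self _ _)
      have hxF : x ∈ Feas ↑F := by
        refine ⟨hxnone.1, fun δ hδ => ?_⟩
        exact (hx (some δ) (Finset.mem_insert_of_mem
          (Finset.mem_image_of_mem some hδ))).2
      exact absurd ((hgv_le ↑F x hxF).trans hxnone.2) (not_le.mpr ht)
    have hIc := mt (Convex.helly_theorem' hGconv) hGempty
    push_neg at hIc
    obtain ⟨I, hIs, hIcard, hIempty⟩ := hIc
    rw [finrank_euclideanSpace_fin] at hIcard
    have hnoneI : none ∈ I := by
      by_contra hn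
      have hmem : x₀ ∈ ⋂ o ∈ I, G o := by
        refine mem_iInter₂.mpr fun o ho => ?_
        match o with
        | none => exact absurd ho hn
        | some δ =>
          have hδF : δ ∈ F := by
            have := hIs ho
            simp only [hs_def, Finset.mem_insert, Finset.mem_image] at this
            obtain h | ⟨δ', hδ', h⟩ := this
            · exact absurd h (by simp)
            · rwa [Option.some_inj.mp h] at hδ'
          exact ⟨hx₀X, hx₀ δ (hFΔ hδF)⟩
      rw [hIempty] at hmem
      exact hmem
    set D : Finset (EuclideanSpace ℝ (Fin m)) := F.filter (fun δ => some δ ∈ I) with hD_def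
    have hDΔ : ↑D ⊆ Δ := fun δ hδ => hFΔ (Finset.filter_subset _ _ hδ)
    refine ⟨D, hDΔ, ?_, ?_⟩
    · have h1 : D.image some ⊆ I.erase none := by
        intro o ho
        simp only [hD_def, Finset.mem_image, Finset.mem_filter] at ho
        obtain ⟨δ, ⟨-, hδI⟩, rfl⟩ := ho
        exact Finset.mem_erase.mpr ⟨Option.some_ne_none δ, hδI⟩
      have h2 : D.card = (D.image some).card :=
        (Finset.card_image_of_injective D (Option.some_injective (EuclideanSpace ℝ (Fin m)))).symm
      have h3 := Finset.card_le_card h1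
      rw [Finset.card_erase_of_mem hnoneI] at h3
      omega
    · refine le_csInf ⟨obj x₀, x₀, hFeasne _ ((hDΔ).trans subset_closure), rfl⟩ ?_
      rintro y ⟨x, hx, rfl⟩
      by_contra hlt
      push_neg at hlt
      have hmem : x ∈ ⋂ o ∈ I, G o := by
        refine mem_iInter₂.mpr fun o ho => ?_
        match o with
        | none => exact ⟨hx.1, hlt.le⟩
        | some δ =>
          have hδF : δ ∈ F := by
            have := hIs ho
            simp only [hs_def, Finset.mem_insert, Finset.mem_image] at this
            obtain h | ⟨δ', hδ', h⟩ := this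
            · exact absurd h (by simp)
            · rwa [Option.some_inj.mp h] at hδ'
          exact ⟨hx.1, hx.2 δ (Finset.mem_coe.mpr (Finset.mem_filter.mpr ⟨hδF, ho⟩))⟩
      rw [hIempty] at hmem
      exact hmem
  -- padding
  have hpad : ∀ D : Finset (EuclideanSpace ℝ (Fin m)), ↑D ⊆ Δ → D.card ≤ d →
      ∃ ω : Fin d → EuclideanSpace ℝ (Fin m), (∀ i, ω i ∈ Δ) ∧ gv ↑D ≤ gv (Set.range ω) := by
    intro D hD hcard
    set l := D.toList with hl_def
    have hlen : l.length ≤ d := by rw [hl_def, Finset.length_toList]; exact hcard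
    set ω : Fin d → EuclideanSpace ℝ (Fin m) := fun i => if h : (i : ℕ) < l.length then l.get ⟨i, h⟩ else δ₀
      with hω_def
    have hωΔ : ∀ i, ω i ∈ Δ := by
      intro i
      simp only [hω_def]
      by_cases h : (i : ℕ) < l.length
      · rw [dif_pos h]
        exact hD (Finset.mem_coe.mpr ((Finset.mem_toList).mp (List.get_mem l ⟨_, h⟩)))
      · rw [dif_neg h]; exact hδ₀
    have hsub : ↑D ⊆ Set.range ω := by
      intro δ hδ
      have hmem : δ ∈ l := (Finset.mem_toList).mpr hδ
      obtain ⟨j, hj⟩ := List.mem_iff_get.mp hmem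
      refine ⟨Fin.castLE hlen j, ?_⟩
      simp only [hω_def, Fin.coe_castLE]
      rw [dif_pos j.2]
      simpa using hj
    exact ⟨ω, hωΔ, mono _ _ hsub (fun δ hδ => subset_closure (by
      obtain ⟨i, rfl⟩ := hδ; exact hωΔ i))⟩
  -- final assembly
  have hclcomp : IsCompact (closure Δ) :=
    Metric.isCompact_of_isClosed_isBounded isClosed_closure hΔbdd.closure
  set K : Set (Fin d → (EuclideanSpace ℝ (Fin m))) := {ω | ∀ i, ω i ∈ closure Δ} with hK_def
  have hKcomp : IsCompact K := by
    have : K = Set.pi univ (fun _ : Fin d => closure Δ) := by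
      ext ω; simp [hK_def, Set.mem_pi]
    rw [this]
    exact isCompact_univ_pi fun _ => hclcomp
  have hKne : K.Nonempty := ⟨fun _ => δ₀, fun i => subset_closure hδ₀⟩
  have hgcont : ContinuousOn (fun ω => scenVal X c f ω) K := by
    refine LipschitzOnWith.continuousOn (K := Real.toNNReal Lg) ?_
    refine LipschitzOnWith.of_dist_le_mul fun ω hω ω' hω' => ?_
    rw [Real.dist_eq]
    calc |scenVal X c f ω - scenVal X c f ω'|
        ≤ Lg * Finset.univ.sup' (Finset.univ_nonempty_iff.mpr ⟨⟨0, hd⟩⟩)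
            (fun i => ‖ω i - ω' i‖) := hLip ω ω' hω hω'
      _ ≤ Lg * dist ω ω' := by
          refine mul_le_mul_of_nonneg_left ?_ hLg
          refine Finset.sup'_le _ _ fun i _ => ?_
          rw [← dist_eq_norm]
          exact dist_le_pi_dist ω ω' i
      _ = ↑(Real.toNNReal Lg) * dist ω ω' := by rw [Real.coe_toNNReal _ hLg]
  obtain ⟨ωs, hωsK, hmax⟩ := hKcomp.exists_isMaxOn hKne hgcont
  refine ⟨ωs, hωsK, ?_⟩
  have h1 : scenVal X c f ωs ≤ robustVal X c f Δ := by
    rw [hscen, hrob, ← hgvcl]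
    exact mono _ _ (range_subset_iff.mpr hωsK) subset_rfl
  have h2 : robustVal X c f Δ ≤ scenVal X c f ωs := by
    by_contra hc
    push_neg at hc
    obtain ⟨t, ht1, ht2⟩ := exists_between hc
    rw [hrob] at ht2
    obtain ⟨F, hF, htF⟩ := hfin t ht2
    obtain ⟨D, hD1, hD2, hD3⟩ := hhelly F hF t htF
    obtain ⟨ω, hωΔ, hω2⟩ := hpad D hD1 hD2
    have hωK : ω ∈ K := fun i => subset_closure (hωΔ i)
    have hle : scenVal X c f ω ≤ scenVal X c f ωs := hmax hωK
    have heq : scenVal X c f ω = gv (Set.range ω) := hscen ω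
    linarith [hD3, hω2, hle, ht1, heq]
  exact le_antisymm h1 h2
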